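/- For every d ≥ 1, the hypercube graph Q_d of dimension d satisfies dem(Q_d) = 2^{d-1}. -/
import Mathlib


open SimpleGraph

/-- `e` is monitored by vertex `x` in `G`: some vertex `y` has its distance to `x`
changed when `e` is deleted (distances in `ℕ∞`, `⊤` if disconnected). -/
def monitors {V : Type*} (G : SimpleGraph V) (x : V) (e : Sym2 V) : Prop :=
  ∃ y : V, G.edist x y ≠ (G.deleteEdges {e}).edist x y

/-- `M` is a distance-edge-monitoring set of `G`. -/
def IsDEMSet {V : Type*} (G : SimpleGraph V) (M : Set V) : Prop :=
  ∀ e ∈ G.edgeSet, ∃ x ∈ M, monitors G x e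

/-- The smallest size of a distance-edge-monitoring set of `G`. -/
noncomputable def dem (V : Type*) [Fintype V] (G : SimpleGraph V) : ℕ :=
  sInf {k | ∃ M : Finset V, M.card = k ∧ IsDEMSet G ↑M}

/-- The set `P(M, e)` of pairs `(x, y)`, `x ∈ M`, whose distance changes when `e` is deleted. -/
def pairs {V : Type*} (G : SimpleGraph V) (M : Set V) (e : Sym2 V) : Set (V × V) :=
  {p | p.1 ∈ M ∧ G.edist p.1 p.2 ≠ (G.deleteEdges {e}).edist p.1 p.2}

/-- `C` is a vertex cover of `G`. -/
def IsVC {V : Type*} (G : SimpleGraph V) (C : Set V) : Prop :=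
  ∀ e ∈ G.edgeSet, ∃ v ∈ C, v ∈ e

/-- The vertex cover number of `G`. -/
noncomputable def vcNum (V : Type*) [Fintype V] (G : SimpleGraph V) : ℕ :=
  sInf {k | ∃ C : Finset V, C.card = k ∧ IsVC G ↑C}

/-- The feedback edge set number: minimum number of edges whose deletion leaves a forest. -/
noncomputable def fes (V : Type*) [Fintype V] (G : SimpleGraph V) : ℕ :=
  sInf {k | ∃ F : Finset (Sym2 V), F.card = k ∧ (G.deleteEdges ↑F).IsAcyclic}

/-- The hypercube graph of dimension `d`: vertices are `Fin d → Bool`, and two vertices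
are adjacent iff they differ in exactly one coordinate. -/
def hypercubeGraph (d : ℕ) : SimpleGraph (Fin d → Bool) :=
  SimpleGraph.fromRel (fun x y => ∃! i, x i ≠ y i)

namespace HCaux

open Finset

variable {d : ℕ}

def diffs (x y : Fin d → Bool) : Finset (Fin d) := Finset.univ.filter (fun i => x i ≠ y i)

def ham (x y : Fin d → Bool) : ℕ := (diffs x y).card

lemma mem_diffs {x y : Fin d → Bool} {i} : i ∈ diffs x y ↔ x i ≠ y i := by
  simp [diffs]

lemma ham_self (x : Fin d → Bool) : ham x x = 0 := by
  simp [ham, diffs]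

lemma ham_eq_zero_iff {x y : Fin d → Bool} : ham x y = 0 ↔ x = y := by
  constructor
  · intro h
    funext i
    by_contra hi
    have hmem : i ∈ diffs x y := mem_diffs.mpr hi
    rw [ham, Finset.card_eq_zero] at h
    simp [h] at hmem
  · rintro rfl; exact ham_self x

lemma adj_iff {x y : Fin d → Bool} : (hypercubeGraph d).Adj x y ↔ ham x y = 1 := by
  rw [hypercubeGraph, SimpleGraph.fromRel_adj]
  constructor
  · rintro ⟨hne, h | h⟩
    · obtain ⟨i, hi, hu⟩ := h
      rw [ham, Finset.card_eq_one]
      refine ⟨i, ?_⟩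
      ext j
      simp only [mem_diffs, Finset.mem_singleton]
      constructor
      · intro hj; exact hu j hj
      · rintro rfl; exact hi
    · obtain ⟨i, hi, hu⟩ := h
      rw [ham, Finset.card_eq_one]
      refine ⟨i, ?_⟩
      ext j
      simp only [mem_diffs, Finset.mem_singleton]
      constructor
      · intro hj; exact hu j (Ne.symm hj)
      · rintro rfl; exact Ne.symm hi
  · intro h
    have hne : x ≠ y := by
      intro he; rw [he, ham_self] at h; omega
    refine ⟨hne, Or.inl ?_⟩
    rw [ham, Finset.card_eq_one] at h
    obtain ⟨i, hi⟩ := h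
    refine ⟨i, ?_, ?_⟩
    · have : i ∈ diffs x y := by rw [hi]; simp
      exact mem_diffs.mp this
    · intro j hj
      have : j ∈ diffs x y := mem_diffs.mpr hj
      rw [hi] at this; simpa using this

lemma ham_triangle (x z y : Fin d → Bool) : ham x y ≤ ham x z + ham z y := by
  have hsub : diffs x y ⊆ diffs x z ∪ diffs z y := by
    intro i hi
    rw [mem_diffs] at hi
    rw [Finset.mem_union, mem_diffs, mem_diffs]
    by_contra hc
    push_neg at hc
    exact hi (hc.1.trans hc.2)
  calc ham x y ≤ (diffs x z ∪ diffs z y).card := Finset.card_le_card hsub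
    _ ≤ ham x z + ham z y := Finset.card_union_le _ _

lemma ham_le_length {G' : SimpleGraph (Fin d → Bool)} (hle : G' ≤ hypercubeGraph d)
    {x y : Fin d → Bool} (p : G'.Walk x y) : ham x y ≤ p.length := by
  induction p with
  | nil => simp [ham_self]
  | @cons u v w h q ih =>
    have h1 : ham u v = 1 := adj_iff.mp (hle h)
    calc ham u w ≤ ham u v + ham v w := ham_triangle u v w
      _ ≤ 1 + q.length := by omega
      _ = (SimpleGraph.Walk.cons h q).length := by simp [SimpleGraph.Walk.length_cons]; omega

lemma ham_le_edist {G' : SimpleGraph (Fin d → Bool)} (hle : G' ≤ hypercubeGraph d)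
    (x y : Fin d → Bool) : (ham x y : ℕ∞) ≤ G'.edist x y := by
  rcases eq_or_ne (G'.edist x y) ⊤ with h | h
  · simp [h]
  · obtain ⟨p, hp⟩ := SimpleGraph.exists_walk_of_edist_ne_top h
    rw [← hp]
    exact_mod_cast ham_le_length hle p

lemma exists_walk_avoid (e : Sym2 (Fin d → Bool)) {x : Fin d → Bool} (hx : x ∉ e) :
    ∀ n (y : Fin d → Bool), ham x y = n →
      ∃ p : ((hypercubeGraph d).deleteEdges {e}).Walk x y, p.length = n := by
  intro n
  induction n with
  | zero =>
    intro y h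
    obtain rfl : x = y := ham_eq_zero_iff.mp h
    exact ⟨SimpleGraph.Walk.nil, rfl⟩
  | succ n ih =>
    intro y h
    -- choose a good coordinate j
    have hkey : ∃ j ∈ diffs x y, s(Function.update y j (x j), y) ≠ e := by
      by_contra hc
      push_neg at hc
      have hne : (diffs x y).Nonempty := by
        rw [← Finset.card_pos, ← ham]; omega
      obtain ⟨j₁, hj₁⟩ := hne
      rcases Nat.eq_zero_or_pos n with hn | hn
      · -- diffs = {j₁}, so update y j₁ (x j₁) = x, contradicting x ∉ e
        have hcard : (diffs x y).card = 1 := by rw [← ham]; omega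
        have hsing : diffs x y = {j₁} := by
          obtain ⟨a, ha⟩ := Finset.card_eq_one.mp hcard
          rw [ha] at hj₁ ⊢
          simp only [Finset.mem_singleton] at hj₁
          rw [hj₁]
        have hxz : Function.update y j₁ (x j₁) = x := by
          funext i
          rcases eq_or_ne i j₁ with rfl | hij
          · simp
          · have : i ∉ diffs x y := by rw [hsing]; simpa using hij
            rw [mem_diffs, not_ne_iff] at this
            simp [Function.update_of_ne hij, this]
        have := hc j₁ hj₁
        rw [hxz] at this
        exact hx (this ▸ Sym2.mem_mk_left x y)
      · -- two distinct coordinates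
        have hcard : 1 < (diffs x y).card := by rw [← ham]; omega
        obtain ⟨a, ha, b, hb, hab⟩ := Finset.one_lt_card.mp hcard
        have hea := hc a ha
        have heb := hc b hb
        rw [← heb] at hea
        have hzay : Function.update y a (x a) ≠ y := by
          intro hcon
          have := congrFun hcon a
          rw [Function.update_self] at this
          exact (mem_diffs.mp ha) this
        have hzby : Function.update y b (x b) ≠ y := by
          intro hcon
          have := congrFun hcon b
          rw [Function.update_self] at this
          exact (mem_diffs.mp hb) this
        rw [Sym2.eq_iff] at hea
        rcases hea with ⟨h1, -⟩ | ⟨h1, h2⟩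
        · have := congrFun h1 b
          rw [Function.update_self, Function.update_of_ne (Ne.symm hab)] at this
          exact (mem_diffs.mp hb) this.symm
        · exact hzby h2.symm
    obtain ⟨j, hj, hje⟩ := hkey
    set z := Function.update y j (x j) with hz
    have hdz : diffs x z = (diffs x y).erase j := by
      ext i
      rw [mem_diffs, Finset.mem_erase, mem_diffs]
      rcases eq_or_ne i j with rfl | hij
      · simp [hz]
      · simp [hz, Function.update_of_ne hij, hij]
    have hham : ham x z = n := by
      rw [ham, hdz, Finset.card_erase_of_mem hj, ← ham, h]
      omega
    obtain ⟨p, hp⟩ := ih z hham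
    have hadj : ((hypercubeGraph d).deleteEdges {e}).Adj z y := by
      rw [SimpleGraph.deleteEdges_adj]
      constructor
      · rw [adj_iff]
        have : diffs z y = {j} := by
          ext i
          rw [mem_diffs, Finset.mem_singleton]
          rcases eq_or_ne i j with rfl | hij
          · simp [hz, mem_diffs.mp hj]
          · simp [hz, Function.update_of_ne hij, hij]
        rw [ham, this, Finset.card_singleton]
      · simpa using hje
    exact ⟨p.concat hadj, by rw [SimpleGraph.Walk.length_concat, hp]⟩

lemma edist_eq_of_notMem {e : Sym2 (Fin d → Bool)} {x : Fin d → Bool} (hx : x ∉ e)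
    (y : Fin d → Bool) :
    ((hypercubeGraph d).deleteEdges {e}).edist x y = ham x y ∧
      (hypercubeGraph d).edist x y = ham x y := by
  obtain ⟨p, hp⟩ := exists_walk_avoid e hx (ham x y) y rfl
  have hdel : ((hypercubeGraph d).deleteEdges {e}).edist x y ≤ ham x y := by
    rw [← hp]; exact SimpleGraph.edist_le p
  have hle := SimpleGraph.deleteEdges_le (G := hypercubeGraph d) {e}
  have h1 := ham_le_edist le_rfl x y
  have h2 := SimpleGraph.edist_anti (G := (hypercubeGraph d).deleteEdges {e}) hle (u := x) (v := y)
  exact ⟨le_antisymm hdel (le_trans h1 h2), le_antisymm (le_trans h2 hdel) h1⟩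

lemma monitors_of_adj {a b : Fin d → Bool} (hab : (hypercubeGraph d).Adj a b) :
    monitors (hypercubeGraph d) a s(a, b) := by
  refine ⟨b, ?_⟩
  have h1 : (hypercubeGraph d).edist a b = 1 := SimpleGraph.edist_eq_one_iff_adj.mpr hab
  rw [h1]
  intro hcon
  have : ((hypercubeGraph d).deleteEdges {s(a, b)}).Adj a b :=
    SimpleGraph.edist_eq_one_iff_adj.mp hcon.symm
  rw [SimpleGraph.deleteEdges_adj] at this
  exact this.2 (Set.mem_singleton _)

lemma monitors_iff {e : Sym2 (Fin d → Bool)} (he : e ∈ (hypercubeGraph d).edgeSet)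
    {x : Fin d → Bool} : monitors (hypercubeGraph d) x e ↔ x ∈ e := by
  constructor
  · intro ⟨y, hy⟩
    by_contra hx
    obtain ⟨h1, h2⟩ := edist_eq_of_notMem hx y
    exact hy (h2.trans h1.symm)
  · intro hx
    induction e with
    | h a b =>
      rw [SimpleGraph.mem_edgeSet] at he
      rw [Sym2.mem_iff] at hx
      rcases hx with rfl | rfl
      · exact monitors_of_adj he
      · rw [Sym2.eq_swap]
        exact monitors_of_adj he.symm

lemma isDEM_iff_isVC (M : Set (Fin d → Bool)) :
    IsDEMSet (hypercubeGraph d) M ↔ IsVC (hypercubeGraph d) M := by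
  constructor
  · intro h e he
    obtain ⟨v, hv, hm⟩ := h e he
    exact ⟨v, hv, (monitors_iff he).mp hm⟩
  · intro h e he
    obtain ⟨v, hv, hm⟩ := h e he
    exact ⟨v, hv, (monitors_iff he).mpr hm⟩

/-! ### Counting -/

def flip (j : Fin d) (x : Fin d → Bool) : Fin d → Bool := Function.update x j (!(x j))

lemma flip_flip (j : Fin d) (x : Fin d → Bool) : flip j (flip j x) = x := by
  funext i
  rcases eq_or_ne i j with rfl | hij
  · simp [flip]
  · simp [flip, Function.update_of_ne hij]

lemma adj_flip (j : Fin d) (x : Fin d → Bool) : (hypercubeGraph d).Adj x (flip j x) := by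
  rw [adj_iff]
  have : diffs x (flip j x) = {j} := by
    ext i
    rw [mem_diffs, Finset.mem_singleton]
    rcases eq_or_ne i j with rfl | hij
    · simp [flip]
    · simp [flip, Function.update_of_ne hij, hij]
  rw [ham, this, Finset.card_singleton]

lemma card_half (j : Fin d) (hd : 1 ≤ d) (s : Finset (Fin d → Bool))
    (h : ∀ x, x ∈ s ↔ flip j x ∉ s) : s.card = 2 ^ (d - 1) := by
  have hcompl : sᶜ.card = s.card := by
    apply Finset.card_bij' (fun x _ => flip j x) (fun x _ => flip j x)
    · intro a ha
      rw [Finset.mem_compl] at ha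
      by_contra hc
      exact ha ((h a).mpr hc)
    · intro a ha
      exact Finset.mem_compl.mpr ((h a).mp ha)
    · intro a _; exact flip_flip j a
    · intro a _; exact flip_flip j a
  have htot : s.card + sᶜ.card = 2 ^ d := by
    rw [Finset.card_add_card_compl]
    simp [Fintype.card_fun]
  have h2 : 2 ^ d = 2 * 2 ^ (d - 1) := by
    rw [← pow_succ']
    congr 1
    omega
  omega

def wt (x : Fin d → Bool) : ℕ := (Finset.univ.filter (fun i => x i = true)).card

lemma wt_update_true (x : Fin d → Bool) (j : Fin d) (h : x j = false) :
    wt (Function.update x j true) = wt x + 1 := by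
  have : (Finset.univ.filter (fun i => Function.update x j true i = true)) =
      insert j (Finset.univ.filter (fun i => x i = true)) := by
    ext i
    simp only [Finset.mem_filter, Finset.mem_univ, true_and, Finset.mem_insert]
    rcases eq_or_ne i j with rfl | hij
    · simp
    · simp [Function.update_of_ne hij, hij]
  rw [wt, this, Finset.card_insert_of_notMem (by simp [h]), wt]

lemma even_wt_flip (j : Fin d) (x : Fin d → Bool) :
    Even (wt x) ↔ ¬ Even (wt (flip j x)) := by
  cases hxj : x j
  · have : flip j x = Function.update x j true := by
      funext i
      rcases eq_or_ne i j with rfl | hij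
      · simp [flip, hxj]
      · simp [flip, Function.update_of_ne hij]
    rw [this, wt_update_true x j hxj, Nat.even_add_one, not_not]
  · have h1 : (flip j x) j = false := by simp [flip, hxj]
    have h2 : Function.update (flip j x) j true = x := by
      funext i
      rcases eq_or_ne i j with rfl | hij
      · simp [hxj]
      · simp [Function.update_of_ne hij, flip]
    have := wt_update_true (flip j x) j h1
    rw [h2] at this
    rw [this, Nat.even_add_one]

lemma eq_flip_of_adj {x y : Fin d → Bool} (h : (hypercubeGraph d).Adj x y) :
    ∃ j, y = flip j x := by
  rw [adj_iff, ham, Finset.card_eq_one] at h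
  obtain ⟨j, hj⟩ := h
  have hjj : x j ≠ y j := mem_diffs.mp (by rw [hj]; simp)
  refine ⟨j, funext fun i => ?_⟩
  rcases eq_or_ne i j with rfl | hij
  · simp only [flip, Function.update_self]
    cases hx : x i <;> cases hy : y i <;> simp_all
  · have : i ∉ diffs x y := by rw [hj]; simpa using hij
    rw [mem_diffs, not_ne_iff] at this
    simp [flip, Function.update_of_ne hij, this.symm]

/-- The even-weight set. -/
def evenSet (d : ℕ) : Finset (Fin d → Bool) := Finset.univ.filter (fun x => Even (wt x))

lemma evenSet_card (hd : 1 ≤ d) : (evenSet d).card = 2 ^ (d - 1) := by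
  apply card_half ⟨0, hd⟩ hd
  intro x
  simp only [evenSet, Finset.mem_filter, Finset.mem_univ, true_and]
  exact even_wt_flip ⟨0, hd⟩ x

lemma evenSet_isVC : IsVC (hypercubeGraph d) ↑(evenSet d) := by
  intro e he
  induction e with
  | h a b =>
    rw [SimpleGraph.mem_edgeSet] at he
    obtain ⟨j, rfl⟩ := eq_flip_of_adj he
    by_cases hA : Even (wt a)
    · exact ⟨a, by simp [evenSet, hA], Sym2.mem_mk_left _ _⟩
    · refine ⟨flip j a, ?_, Sym2.mem_mk_right _ _⟩
      have := even_wt_flip j a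
      simp only [evenSet, Finset.coe_filter, Set.mem_setOf_eq, Finset.mem_univ, true_and]
      tauto

lemma vc_card_ge (hd : 1 ≤ d) (C : Finset (Fin d → Bool))
    (hC : IsVC (hypercubeGraph d) ↑C) : 2 ^ (d - 1) ≤ C.card := by
  set j0 : Fin d := ⟨0, hd⟩
  set F : Finset (Fin d → Bool) := Finset.univ.filter (fun x => x j0 = false) with hF
  have hFcard : F.card = 2 ^ (d - 1) := by
    apply card_half j0 hd
    intro x
    simp only [hF, Finset.mem_filter, Finset.mem_univ, true_and, flip, Function.update_self]
    cases hx : x j0 <;> simp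
  have hsub : F ⊆ C.image (fun x => Function.update x j0 false) := by
    intro z hz
    have hz0 : z j0 = false := by
      simp only [hF, Finset.mem_filter, Finset.mem_univ, true_and] at hz; exact hz
    have hedge : s(z, flip j0 z) ∈ (hypercubeGraph d).edgeSet :=
      ((hypercubeGraph d).mem_edgeSet).mpr (adj_flip j0 z)
    obtain ⟨v, hv, hve⟩ := hC _ hedge
    rw [Finset.mem_image]
    refine ⟨v, hv, ?_⟩
    rw [Sym2.mem_iff] at hve
    rcases hve with rfl | rfl
    · funext i
      rcases eq_or_ne i j0 with rfl | hij
      · simp [hz0]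
      · simp [Function.update_of_ne hij]
    · funext i
      rcases eq_or_ne i j0 with rfl | hij
      · simp [hz0]
      · simp [Function.update_of_ne hij, flip]
  calc 2 ^ (d - 1) = F.card := hFcard.symm
    _ ≤ (C.image _).card := Finset.card_le_card hsub
    _ ≤ C.card := Finset.card_image_le

end HCaux

theorem stmt13 (d : ℕ) (hd : 1 ≤ d) :
    dem (Fin d → Bool) (hypercubeGraph d) = 2 ^ (d - 1) := by
  have hmem : 2 ^ (d - 1) ∈
      {k | ∃ M : Finset (Fin d → Bool), M.card = k ∧ IsDEMSet (hypercubeGraph d) ↑M} :=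
    ⟨HCaux.evenSet d, HCaux.evenSet_card hd, (HCaux.isDEM_iff_isVC _).mpr HCaux.evenSet_isVC⟩
  unfold dem
  apply le_antisymm
  · exact Nat.sInf_le hmem
  · apply le_csInf ⟨_, hmem⟩
    rintro k ⟨M, hcard, hM⟩
    rw [← hcard]
    exact HCaux.vc_card_ge hd M ((HCaux.isDEM_iff_isVC _).mp hM)
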